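/- Let H be a real Hilbert space and let A = T₁ + T₂, where T₁ : H → H is a self-adjoint continuous linear operator with T₁ ∘ T₁ equal to the identity, and T₂ : H → H is a compact self-adjoint continuous linear operator. Then there exists d > 0 such that every λ in the real spectrum of A with λ ≠ 0 satisfies |λ| ≥ d; that is, the spectrum of A does not accumulate at 0. -/

import Mathlib

open RealInnerProductSpace ContinuousLinearMap

lemma exists_approx_eigen
    {H : Type*} [NormedAddCommGroup H] [InnerProductSpace ℝ H] [CompleteSpace H]
    (A : H →L[ℝ] H) (hA : IsSelfAdjoint A) {l ε : ℝ}
    (hl : l ∈ spectrum ℝ A) (hε : 0 < ε) :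
    ∃ x : H, ‖x‖ = 1 ∧ ‖A x - l • x‖ < ε := by
  by_contra hcon
  push_neg at hcon
  set B : H →L[ℝ] H := algebraMap ℝ (H →L[ℝ] H) l - A with hB
  have hBsa : IsSelfAdjoint B := by
    have : IsSelfAdjoint (algebraMap ℝ (H →L[ℝ] H) l) := IsSelfAdjoint.algebraMap _ (IsSelfAdjoint.all l)
    exact this.sub hA
  have hBapp : ∀ x : H, B x = l • x - A x := by
    intro x; simp [hB, Algebra.algebraMap_eq_smul_one]
  have hlow : ∀ x : H, ε * ‖x‖ ≤ ‖B x‖ := by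
    intro x
    rcases eq_or_ne x 0 with rfl | hx
    · simp
    · have hnx : (0:ℝ) < ‖x‖ := norm_pos_iff.mpr hx
      have h1 : ‖(‖x‖⁻¹ • x : H)‖ = 1 := by
        rw [norm_smul]; simp [abs_of_pos hnx, inv_mul_cancel₀ hnx.ne']
      have := hcon _ h1
      have h2 : A (‖x‖⁻¹ • x) - l • (‖x‖⁻¹ • x) = ‖x‖⁻¹ • (A x - l • x) := by
        rw [map_smul, smul_sub, smul_comm]
      rw [h2, norm_smul] at this
      have h3 : ‖B x‖ = ‖A x - l • x‖ := by
        rw [hBapp]; rw [norm_sub_rev]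
      rw [h3]
      calc ε * ‖x‖ ≤ (‖(‖x‖⁻¹ : ℝ)‖ * ‖A x - l • x‖) * ‖x‖ := by
            exact mul_le_mul_of_nonneg_right this hnx.le
        _ = ‖A x - l • x‖ := by
            simp [abs_of_pos (inv_pos.mpr hnx)]
            field_simp
  have hεnn : (0 : NNReal) < ⟨ε, hε.le⟩ := hε
  have h_anti : AntilipschitzWith (⟨ε, hε.le⟩ : NNReal)⁻¹ B := by
    refine B.antilipschitz_of_bound fun x => ?_
    have hc : (((⟨ε, hε.le⟩ : NNReal)⁻¹ : NNReal) : ℝ) = ε⁻¹ := NNReal.coe_inv _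
    calc ‖x‖ = ε⁻¹ * (ε * ‖x‖) := by rw [← mul_assoc, inv_mul_cancel₀ hε.ne', one_mul]
      _ ≤ ε⁻¹ * ‖B x‖ := by gcongr; exact hlow x
      _ = _ := congrArg (· * ‖B x‖) hc.symm
  have hU : IsUnit B := by
    rw [ContinuousLinearMap.isUnit_iff_bijective,
      ContinuousLinearMap.bijective_iff_dense_range_and_antilipschitz]
    refine ⟨?_, ⟨_, h_anti⟩⟩
    have _inst := h_anti.completeSpace_range_clm
    rw [Submodule.topologicalClosure_eq_top_iff, Submodule.eq_bot_iff]
    intro x hx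
    have hBx : B x = 0 := by
      have h0 : ⟪B (B x), x⟫ = 0 := hx (B (B x)) ⟨B x, rfl⟩
      have h1 := ContinuousLinearMap.adjoint_inner_left B (B x) x
      rw [hBsa.adjoint_eq] at h1
      have h2 : ⟪B x, B x⟫ = 0 := h1.trans ((real_inner_comm _ _).trans h0)
      simpa [inner_self_eq_zero] using h2
    have h2 := hlow x
    rw [hBx, norm_zero] at h2
    have h3 : x = 0 := norm_eq_zero.mp
      (le_antisymm (by nlinarith [norm_nonneg x]) (norm_nonneg x))
    exact h3
  exact (spectrum.mem_iff.mp hl) hU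

open RealInnerProductSpace ContinuousLinearMap

section Aux

variable {H : Type*} [NormedAddCommGroup H] [InnerProductSpace ℝ H] [CompleteSpace H]

lemma sa_symm (B : H →L[ℝ] H) (hB : IsSelfAdjoint B) (u v : H) :
    ⟪B u, v⟫ = ⟪u, B v⟫ := by
  have := ContinuousLinearMap.adjoint_inner_left B v u
  rwa [hB.adjoint_eq] at this

end Aux


/-- Spectral gap (proof of Theorem 5.1): if `A = T₁ + T₂` with `T₁` a self-adjoint
involution and `T₂` compact self-adjoint on a real Hilbert space, then the nonzero
real spectrum of `A` is bounded away from `0`. -/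
theorem spectral_gap_of_involution_add_compact
    {H : Type*} [NormedAddCommGroup H] [InnerProductSpace ℝ H] [CompleteSpace H]
    (T₁ T₂ : H →L[ℝ] H)
    (h₁sa : IsSelfAdjoint T₁) (h₁sq : T₁.comp T₁ = ContinuousLinearMap.id ℝ H)
    (h₂sa : IsSelfAdjoint T₂) (h₂cpt : IsCompactOperator ⇑T₂) :
    ∃ d : ℝ, 0 < d ∧ ∀ l ∈ spectrum ℝ (T₁ + T₂), l ≠ 0 → d ≤ |l| := by
  set A : H →L[ℝ] H := T₁ + T₂ with hAdef
  have hAsa : IsSelfAdjoint A := h₁sa.add h₂sa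
  by_contra hcon
  push_neg at hcon
  -- hcon : ∀ d, 0 < d → ∃ l ∈ spectrum ℝ A, l ≠ 0 ∧ |l| < d
  set P : ℝ → Prop := fun l => l ∈ spectrum ℝ A ∧ l ≠ 0 with hPdef
  have hstep : ∀ d : ℝ, 0 < d → ∃ l, P l ∧ |l| < d := by
    intro d hd
    obtain ⟨l, hl1, hl2, hl3⟩ := hcon d hd
    exact ⟨l, ⟨hl1, hl2⟩, hl3⟩
  -- build the sequence
  obtain ⟨lam, hlamP, hlam0, hlamS⟩ :
      ∃ lam : ℕ → ℝ, (∀ n, P (lam n)) ∧ |lam 0| < 1/100 ∧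
        ∀ n, |lam (n+1)| < |lam n| / 2 := by
    have hpos : ∀ l : {l : ℝ // P l}, 0 < |l.1| / 2 := by
      intro l
      have := l.2.2
      positivity
    set g : {l : ℝ // P l} → {l : ℝ // P l} :=
      fun l => ⟨(hstep (|l.1|/2) (hpos l)).choose, (hstep (|l.1|/2) (hpos l)).choose_spec.1⟩
      with hgdef
    have hg : ∀ l, |(g l).1| < |l.1| / 2 := fun l => (hstep (|l.1|/2) (hpos l)).choose_spec.2
    set x0 : {l : ℝ // P l} :=
      ⟨(hstep (1/100) (by norm_num)).choose, (hstep (1/100) (by norm_num)).choose_spec.1⟩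
    refine ⟨fun n => (g^[n] x0).1, fun n => (g^[n] x0).2, ?_, ?_⟩
    · exact (hstep (1/100) (by norm_num)).choose_spec.2
    · intro n
      show |(g^[n+1] x0).1| < |(g^[n] x0).1| / 2
      rw [Function.iterate_succ_apply']
      exact hg _
  have hlamne : ∀ n, lam n ≠ 0 := fun n => (hlamP n).2
  have hlampos : ∀ n, 0 < |lam n| := fun n => abs_pos.mpr (hlamne n)
  have hlamsmall : ∀ n, |lam n| < 1/100 := by
    intro n
    induction n with
    | zero => exact hlam0
    | succ k ih => calc |lam (k+1)| < |lam k| / 2 := hlamS k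
        _ ≤ |lam k| := by linarith [hlampos k]
        _ < 1/100 := ih
  have hdec : ∀ m n, m < n → |lam n| ≤ |lam m| / 2 := by
    intro m n hmn
    obtain ⟨k, rfl⟩ : ∃ k, n = m + k + 1 := ⟨n - m - 1, by omega⟩
    clear hmn
    induction k with
    | zero => exact (hlamS m).le
    | succ j ih =>
      have h1 := hlamS (m + j + 1)
      have : m + (j+1) + 1 = (m + j + 1) + 1 := by omega
      rw [this]
      calc |lam ((m + j + 1) + 1)| ≤ |lam (m + j + 1)| / 2 := (hlamS _).le
        _ ≤ |lam m| / 2 := by linarith [hlampos (m+j+1)]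
  -- approximate eigenvectors
  have hx : ∀ n, ∃ v : H, ‖v‖ = 1 ∧ ‖A v - lam n • v‖ < |lam n| / 100 := by
    intro n
    exact exists_approx_eigen A hAsa (hlamP n).1 (by linarith [hlampos n])
  choose x hx1 hx2 using hx
  have hsymA := sa_symm A hAsa
  -- inner product bound
  have hinner : ∀ m n, m < n → |⟪x m, x n⟫| ≤ 3/100 := by
    intro m n hmn
    have hid : (lam n - lam m) * ⟪x m, x n⟫ =
        ⟪A (x m) - lam m • x m, x n⟫ - ⟪x m, A (x n) - lam n • x n⟫ := by
      rw [inner_sub_left, inner_sub_right, real_inner_smul_left, real_inner_smul_right,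
        hsymA (x m) (x n)]
      ring
    have hb1 : |⟪A (x m) - lam m • x m, x n⟫| ≤ |lam m| / 100 := by
      calc |⟪A (x m) - lam m • x m, x n⟫| ≤ ‖A (x m) - lam m • x m‖ * ‖x n‖ :=
            abs_real_inner_le_norm _ _
        _ ≤ |lam m| / 100 := by rw [hx1 n, mul_one]; exact (hx2 m).le
    have hb2 : |⟪x m, A (x n) - lam n • x n⟫| ≤ |lam n| / 100 := by
      calc |⟪x m, A (x n) - lam n • x n⟫| ≤ ‖x m‖ * ‖A (x n) - lam n • x n‖ :=
            abs_real_inner_le_norm _ _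
        _ ≤ |lam n| / 100 := by rw [hx1 m, one_mul]; exact (hx2 n).le
    have hgap : |lam m| / 2 ≤ |lam n - lam m| := by
      have h1 : |lam n| ≤ |lam m| / 2 := hdec m n hmn
      have h2 : |lam m| - |lam n| ≤ |lam n - lam m| := by
        have := abs_sub_abs_le_abs_sub (lam m) (lam n)
        rw [abs_sub_comm] at this
        linarith
      linarith
    have hkey : |lam n - lam m| * |⟪x m, x n⟫| ≤ |lam m| * 3 / 200 := by
      rw [← abs_mul, hid]
      have h1 : |lam n| ≤ |lam m| / 2 := hdec m n hmn
      calc |⟪A (x m) - lam m • x m, x n⟫ - ⟪x m, A (x n) - lam n • x n⟫|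
          ≤ |⟪A (x m) - lam m • x m, x n⟫| + |⟪x m, A (x n) - lam n • x n⟫| := abs_sub _ _
        _ ≤ |lam m| / 100 + |lam n| / 100 := by linarith
        _ ≤ |lam m| * 3 / 200 := by linarith
    nlinarith [hlampos m, abs_nonneg (⟪x m, x n⟫), abs_nonneg (lam n - lam m)]
  -- separation of T₂ images
  have hiso : ∀ v : H, ‖T₁ v‖ = ‖v‖ := by
    intro v
    have hTT : T₁ (T₁ v) = v := by
      have := congrFun (congrArg DFunLike.coe h₁sq) v
      simpa using this
    have h1 : ⟪T₁ v, T₁ v⟫ = ⟪v, v⟫ := by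
      rw [sa_symm T₁ h₁sa, hTT]
    have h2 : ‖T₁ v‖ ^ 2 = ‖v‖ ^ 2 := by
      rw [← real_inner_self_eq_norm_sq, ← real_inner_self_eq_norm_sq, h1]
    nlinarith [norm_nonneg (T₁ v), norm_nonneg v]
  have hAx : ∀ n, ‖A (x n)‖ ≤ 2/100 := by
    intro n
    calc ‖A (x n)‖ = ‖(A (x n) - lam n • x n) + lam n • x n‖ := by rw [sub_add_cancel]
      _ ≤ ‖A (x n) - lam n • x n‖ + ‖lam n • x n‖ := norm_add_le _ _
      _ ≤ |lam n| / 100 + |lam n| := by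
          rw [norm_smul, hx1 n, mul_one]
          have := (hx2 n).le
          simp only [Real.norm_eq_abs]
          linarith
      _ ≤ 2/100 := by linarith [hlamsmall n]
  have hsep : ∀ m n, m < n → 1 ≤ ‖T₂ (x m) - T₂ (x n)‖ := by
    intro m n hmn
    have hT2 : ∀ v : H, T₂ v = A v - T₁ v := by
      intro v; simp [hAdef]
    have hdiff : ‖x m - x n‖ ^ 2 ≥ 19/10 := by
      have := norm_sub_sq_real (x m) (x n)
      rw [hx1 m, hx1 n] at this
      have h2 := hinner m n hmn
      have h3 : ⟪x m, x n⟫ ≤ 3/100 := (abs_le.mp h2).2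
      rw [this]
      nlinarith
    have hT1diff : (13:ℝ)/10 ≤ ‖T₁ (x m) - T₁ (x n)‖ := by
      have h1 : T₁ (x m) - T₁ (x n) = T₁ (x m - x n) := by rw [map_sub]
      rw [h1, hiso]
      nlinarith [norm_nonneg (x m - x n), hdiff, sq_nonneg (‖x m - x n‖ - 13/10)]
    have h2 : T₂ (x m) - T₂ (x n) =
        (A (x m) - A (x n)) - (T₁ (x m) - T₁ (x n)) := by
      rw [hT2, hT2]; abel
    have h3 : ‖T₁ (x m) - T₁ (x n)‖ - ‖A (x m) - A (x n)‖ ≤ ‖T₂ (x m) - T₂ (x n)‖ := by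
      rw [h2]
      have := norm_sub_norm_le (T₁ (x m) - T₁ (x n)) (A (x m) - A (x n))
      rw [← norm_neg ((A (x m) - A (x n)) - (T₁ (x m) - T₁ (x n)))]
      have heq : -((A (x m) - A (x n)) - (T₁ (x m) - T₁ (x n)))
          = (T₁ (x m) - T₁ (x n)) - (A (x m) - A (x n)) := by abel
      rw [heq]
      linarith [abs_norm_sub_norm_le (T₁ (x m) - T₁ (x n)) (A (x m) - A (x n)),
        norm_sub_norm_le (T₁ (x m) - T₁ (x n)) (A (x m) - A (x n))]
    have h4 : ‖A (x m) - A (x n)‖ ≤ 4/100 := by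
      calc ‖A (x m) - A (x n)‖ ≤ ‖A (x m)‖ + ‖A (x n)‖ := norm_sub_le _ _
        _ ≤ 4/100 := by linarith [hAx m, hAx n]
    linarith
  -- contradiction with compactness
  obtain ⟨K, hK, hKmem⟩ := h₂cpt
  obtain ⟨r, hr, hball⟩ := Metric.mem_nhds_iff.mp hKmem
  set y : ℕ → H := fun n => T₂ ((r/2) • x n) with hydef
  have hyK : ∀ n, y n ∈ K := by
    intro n
    apply hball
    rw [Metric.mem_ball, dist_zero_right, norm_smul, hx1 n, mul_one]
    rw [Real.norm_eq_abs, abs_of_pos (by linarith : (0:ℝ) < r/2)]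
    linarith
  obtain ⟨a, -, φ, hφ, hconv⟩ := hK.tendsto_subseq hyK
  rw [Metric.tendsto_atTop] at hconv
  obtain ⟨N, hN⟩ := hconv (r/4) (by linarith)
  have hd1 := hN N le_rfl
  have hd2 := hN (N+1) (by omega)
  have hmn : φ N < φ (N+1) := hφ (by omega)
  have hsep' := hsep (φ N) (φ (N+1)) hmn
  have hyd : ‖y (φ N) - y (φ (N+1))‖ = (r/2) * ‖T₂ (x (φ N)) - T₂ (x (φ (N+1)))‖ := by
    have : y (φ N) - y (φ (N+1)) = (r/2) • (T₂ (x (φ N)) - T₂ (x (φ (N+1)))) := by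
      simp only [hydef, map_smul, smul_sub]
    rw [this, norm_smul, Real.norm_eq_abs, abs_of_pos (by linarith : (0:ℝ) < r/2)]
  have hbig : r/2 ≤ ‖y (φ N) - y (φ (N+1))‖ := by
    rw [hyd]
    nlinarith
  have hsmall2 : ‖y (φ N) - y (φ (N+1))‖ < r/2 := by
    calc ‖y (φ N) - y (φ (N+1))‖ ≤ dist (y (φ N)) a + dist a (y (φ (N+1))) := by
          rw [← dist_eq_norm]; exact dist_triangle _ _ _
      _ < r/4 + r/4 := by rw [dist_comm a]; exact add_lt_add hd1 hd2
      _ = r/2 := by ring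
  linarith
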